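/- For every r ≥ 2, t ≥ 3 and n, there exists an (r,S_t)-extremal graph G on n vertices such that the maximum degree of G is at most r(t−1)−1 and all but at most ⌈r/2⌉·(t−1)+1 vertices of G have degree at least ⌈r/2⌉·(t−1). -/

import Mathlib

open SimpleGraph Finset

/-- `G` contains a copy of `H`, i.e. a subgraph isomorphic to `H`. -/
def SimpleGraph.ContainsCopy {V W : Type*} (G : SimpleGraph V) (H : SimpleGraph W) : Prop :=
  ∃ f : H →g G, Function.Injective f

/-- The color class of color `i` in the `r`-edge-coloring `c` of `G`. -/
def colorClass {V : Type*} {r : ℕ} (G : SimpleGraph V) (c : G.edgeSet → Fin r) (i : Fin r) :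
    SimpleGraph V :=
  SimpleGraph.fromEdgeSet {e | ∃ h : e ∈ G.edgeSet, c ⟨e, h⟩ = i}

/-- The coloring `c` of `G` has a monochromatic copy of `H`. -/
def HasMonoCopy {V W : Type*} {r : ℕ} (G : SimpleGraph V) (H : SimpleGraph W)
    (c : G.edgeSet → Fin r) : Prop :=
  ∃ i : Fin r, (colorClass G c i).ContainsCopy H

/-- `c_{r,H}(G)`: the number of `r`-edge-colorings of `G` without a monochromatic copy of `H`. -/
noncomputable def goodCount {V W : Type*} (r : ℕ) (H : SimpleGraph W) (G : SimpleGraph V) : ℕ :=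
  Nat.card {c : G.edgeSet → Fin r // ¬ HasMonoCopy G H c}

/-- `c_{r,H}(n)`: the maximum of `c_{r,H}(G)` over all graphs `G` on `n` vertices. -/
noncomputable def cMax {W : Type*} (r : ℕ) (H : SimpleGraph W) (n : ℕ) : ℕ :=
  sSup {k | ∃ G : SimpleGraph (Fin n), goodCount r H G = k}

/-- `ex(n,H)`: the maximum number of edges of an `H`-free graph on `n` vertices. -/
noncomputable def exNum {W : Type*} (n : ℕ) (H : SimpleGraph W) : ℕ :=
  sSup {k | ∃ G : SimpleGraph (Fin n), ¬ G.ContainsCopy H ∧ G.edgeSet.ncard = k}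

/-- The star `S_t` with `t` edges: center `0` joined to `t` leaves. -/
def starGraph (t : ℕ) : SimpleGraph (Fin (t + 1)) where
  Adj u v := u ≠ v ∧ (u = 0 ∨ v = 0)
  symm := ⟨fun u v h => ⟨h.1.symm, h.2.symm⟩⟩
  loopless := ⟨fun u h => h.1 rfl⟩

section Star

open Classical in
/-- colored neighborhood -/
noncomputable def colNbhd {n r : ℕ} (G : SimpleGraph (Fin n)) (c : G.edgeSet → Fin r)
    (i : Fin r) (v : Fin n) : Set (Fin n) :=
  {u | ∃ h : G.Adj v u, c ⟨s(v, u), G.mem_edgeSet.mpr h⟩ = i}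

variable {n r t : ℕ}

lemma colorClass_neighborSet (G : SimpleGraph (Fin n)) (c : G.edgeSet → Fin r) (i : Fin r)
    (v : Fin n) : (colorClass G c i).neighborSet v = colNbhd G c i v := by
  ext u
  simp only [SimpleGraph.mem_neighborSet, colorClass, SimpleGraph.fromEdgeSet_adj,
    Set.mem_setOf_eq, colNbhd]
  constructor
  · rintro ⟨⟨he, hc⟩, _⟩
    exact ⟨G.mem_edgeSet.mp he, hc⟩
  · rintro ⟨h, hc⟩
    exact ⟨⟨G.mem_edgeSet.mpr h, hc⟩, G.ne_of_adj h⟩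

lemma containsCopy_star_iff (K : SimpleGraph (Fin n)) (ht : 1 ≤ t) :
    K.ContainsCopy (_root_.starGraph t) ↔ ∃ v, t ≤ (K.neighborSet v).ncard := by
  constructor
  · rintro ⟨f, hf⟩
    refine ⟨f 0, ?_⟩
    have hsub : Set.range (fun j : Fin t => f j.succ) ⊆ K.neighborSet (f 0) := by
      rintro x ⟨j, rfl⟩
      exact f.map_adj ⟨(Fin.succ_ne_zero j).symm, Or.inl rfl⟩
    have hinj : Function.Injective (fun j : Fin t => f j.succ) :=
      fun a b hab => Fin.succ_injective _ (hf hab)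
    have hr : Set.range (fun j : Fin t => f j.succ)
        = ((univ.image (fun j : Fin t => f j.succ) : Finset (Fin n)) : Set (Fin n)) := by
      simp [Set.image_univ]
    calc t = (Set.range (fun j : Fin t => f j.succ)).ncard := by
              rw [hr, Set.ncard_coe_finset, Finset.card_image_of_injective _ hinj,
                Finset.card_univ, Fintype.card_fin]
      _ ≤ (K.neighborSet (f 0)).ncard := Set.ncard_le_ncard hsub (Set.toFinite _)
  · rintro ⟨v, hv⟩
    haveI : Fintype (K.neighborSet v) := Fintype.ofFinite _
    have hcard : t ≤ Fintype.card (K.neighborSet v) := by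
      rwa [← Nat.card_eq_fintype_card, Nat.card_coe_set_eq]
    obtain ⟨g⟩ := Function.Embedding.nonempty_of_card_le
      (by simpa using hcard : Fintype.card (Fin t) ≤ Fintype.card (K.neighborSet v))
    refine ⟨⟨Fin.cases v (fun j => (g j : Fin n)), ?_⟩, ?_⟩
    · rintro a b ⟨hne, h0⟩
      rcases h0 with h0 | h0
      · subst h0
        obtain rfl | ⟨j, rfl⟩ := b.eq_zero_or_eq_succ
        · exact absurd rfl hne
        · simp only [Fin.cases_zero, Fin.cases_succ]
          exact (g j).2
      · subst h0
        obtain rfl | ⟨j, rfl⟩ := a.eq_zero_or_eq_succ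
        · exact absurd rfl hne
        · simp only [Fin.cases_zero, Fin.cases_succ]
          exact ((g j).2 : K.Adj v (g j)).symm
    · intro a b hab
      obtain rfl | ⟨ja, rfl⟩ := a.eq_zero_or_eq_succ <;>
        obtain rfl | ⟨jb, rfl⟩ := b.eq_zero_or_eq_succ
      · rfl
        
      · exact absurd (hab : v = (g jb : Fin n)) (fun h => K.ne_of_adj (g jb).2 h)
      · exact absurd (hab : (g ja : Fin n) = v) (fun h => K.ne_of_adj (g ja).2 h.symm)
      · have : g ja = g jb := Subtype.ext (hab : (g ja : Fin n) = (g jb : Fin n))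
        rw [g.injective this]

lemma hasMonoCopy_iff (G : SimpleGraph (Fin n)) (c : G.edgeSet → Fin r) (ht : 1 ≤ t) :
    HasMonoCopy G (_root_.starGraph t) c ↔ ∃ i v, t ≤ (colNbhd G c i v).ncard := by
  unfold HasMonoCopy
  simp_rw [containsCopy_star_iff _ ht, colorClass_neighborSet]

end Star

section Count
variable {n r t : ℕ}

/-- Good coloring: every colored neighborhood is small. -/
def GoodCol (t : ℕ) (G : SimpleGraph (Fin n)) {r : ℕ} (c : G.edgeSet → Fin r) : Prop :=
  ∀ i v, (colNbhd G c i v).ncard < t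

lemma not_mono_iff (ht : 1 ≤ t) (G : SimpleGraph (Fin n)) (c : G.edgeSet → Fin r) :
    ¬ HasMonoCopy G (_root_.starGraph t) c ↔ GoodCol t G c := by
  rw [hasMonoCopy_iff G c ht]
  push_neg
  rfl

lemma goodCount_eq_card (ht : 1 ≤ t) (G : SimpleGraph (Fin n)) :
    goodCount r (_root_.starGraph t) G = Nat.card {c : G.edgeSet → Fin r // GoodCol t G c} :=
  Nat.card_congr (Equiv.subtypeEquivRight fun c => not_mono_iff ht G c)

lemma sum_colNbhd (hr : 0 < r) (G : SimpleGraph (Fin n)) (c : G.edgeSet → Fin r) (v : Fin n) :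
    ∑ i : Fin r, (colNbhd G c i v).ncard = (G.neighborSet v).ncard := by
  classical
  set F : Fin n → Fin r := fun u =>
    if h : G.Adj v u then c ⟨s(v, u), G.mem_edgeSet.mpr h⟩ else ⟨0, hr⟩ with hF
  have key := Finset.card_eq_sum_card_fiberwise
    (s := (G.neighborSet v).toFinite.toFinset) (t := univ) (f := F)
    (fun x _ => mem_univ _)
  rw [Set.ncard_eq_toFinset_card _ (Set.toFinite _), key]
  refine Finset.sum_congr rfl fun i _ => ?_
  rw [Set.ncard_eq_toFinset_card _ (Set.toFinite _)]
  congr 1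
  ext u
  simp only [Set.Finite.mem_toFinset, Finset.mem_filter, SimpleGraph.mem_neighborSet,
    colNbhd, Set.mem_setOf_eq]
  constructor
  · rintro ⟨ha, hc⟩
    exact ⟨ha, by simp only [hF, dif_pos ha]; exact hc⟩
  · rintro ⟨ha, hc⟩
    simp only [hF, dif_pos ha] at hc
    exact ⟨ha, hc⟩

/-- restriction of a coloring to a subgraph -/
def resC {G₁ G₂ : SimpleGraph (Fin n)} (h : G₁ ≤ G₂) (c : G₂.edgeSet → Fin r) :
    G₁.edgeSet → Fin r :=
  fun e => c ⟨e.1, SimpleGraph.edgeSet_mono h e.2⟩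

lemma colNbhd_resC_subset {G₁ G₂ : SimpleGraph (Fin n)} (h : G₁ ≤ G₂) (c : G₂.edgeSet → Fin r)
    (i : Fin r) (v : Fin n) : colNbhd G₁ (resC h c) i v ⊆ colNbhd G₂ c i v := by
  rintro u ⟨ha, hc⟩
  exact ⟨h ha, hc⟩

lemma GoodCol_resC {G₁ G₂ : SimpleGraph (Fin n)} (h : G₁ ≤ G₂) {c : G₂.edgeSet → Fin r}
    (hc : GoodCol t G₂ c) : GoodCol t G₁ (resC h c) := fun i v =>
  lt_of_le_of_lt (Set.ncard_le_ncard (colNbhd_resC_subset h c i v) (Set.toFinite _)) (hc i v)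

lemma goodCount_le_cMax (H : SimpleGraph (Fin (t+1))) (G : SimpleGraph (Fin n)) :
    goodCount r H G ≤ cMax r H n := by
  have hfin : {k | ∃ G : SimpleGraph (Fin n), goodCount r H G = k}.Finite := by
    have : {k | ∃ G : SimpleGraph (Fin n), goodCount r H G = k}
        = Set.range (goodCount r H (V := Fin n)) := by
      ext k; simp [Set.mem_setOf_eq, Set.mem_range, eq_comm]
    rw [this]
    exact Set.finite_range _
  exact le_csSup hfin.bddAbove ⟨G, rfl⟩

lemma cMax_attained (H : SimpleGraph (Fin (t+1))) :
    ∃ G : SimpleGraph (Fin n), goodCount r H G = cMax r H n := by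
  have hne : {k | ∃ G : SimpleGraph (Fin n), goodCount r H G = k}.Nonempty := ⟨_, ⊥, rfl⟩
  have hfin : {k | ∃ G : SimpleGraph (Fin n), goodCount r H G = k}.Finite := by
    have : {k | ∃ G : SimpleGraph (Fin n), goodCount r H G = k}
        = Set.range (goodCount r H (V := Fin n)) := by
      ext k; simp [Set.mem_setOf_eq, Set.mem_range, eq_comm]
    rw [this]
    exact Set.finite_range _
  exact Nat.sSup_mem hne hfin.bddAbove

lemma one_le_cMax (ht : 1 ≤ t) (hr : 0 < r) : 1 ≤ cMax r (_root_.starGraph t) (n := n) := by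
  refine le_trans ?_ (goodCount_le_cMax (_root_.starGraph t) (⊥ : SimpleGraph (Fin n)))
  rw [goodCount_eq_card ht]
  have hc : GoodCol t (⊥ : SimpleGraph (Fin n))
      (fun e => (⟨0, hr⟩ : Fin r)) := by
    intro i v
    have : colNbhd (⊥ : SimpleGraph (Fin n)) (fun _ => (⟨0, hr⟩ : Fin r)) i v = ∅ := by
      ext u; simp [colNbhd]
    rw [this]
    simpa using (show 0 < t from ht)
  haveI : Nonempty {c : (⊥ : SimpleGraph (Fin n)).edgeSet → Fin r // GoodCol t ⊥ c} :=
    ⟨⟨_, hc⟩⟩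
  exact Nat.card_pos

end Count

section Delete
variable {n r t : ℕ}

lemma goodCount_le_delete (ht : 2 ≤ t) {G : SimpleGraph (Fin n)} {v u : Fin n}
    (hadj : G.Adj v u) (hdeg : r * (t - 1) ≤ (G.neighborSet v).ncard) :
    goodCount r (_root_.starGraph t) G ≤ goodCount r (_root_.starGraph t) (G.deleteEdges {s(v, u)}) := by
  have ht1 : 1 ≤ t := le_trans (by norm_num) ht
  set G' := G.deleteEdges {s(v, u)} with hG'
  have hle : G' ≤ G := SimpleGraph.deleteEdges_le _
  rw [goodCount_eq_card ht1, goodCount_eq_card ht1]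
  refine Nat.card_le_card_of_injective
    (fun cc : {c : G.edgeSet → Fin r // GoodCol t G c} =>
      (⟨resC hle cc.1, GoodCol_resC hle cc.2⟩ : {c : G'.edgeSet → Fin r // GoodCol t G' c}))
    ?_
  rintro ⟨c₁, hc₁⟩ ⟨c₂, hc₂⟩ hres
  simp only [Subtype.mk.injEq] at hres ⊢
  have hagree : ∀ f : G.edgeSet, (f : Sym2 (Fin n)) ≠ s(v, u) → c₁ f = c₂ f := by
    intro f hf
    have hf' : (f : Sym2 (Fin n)) ∈ G'.edgeSet := by
      rw [hG', SimpleGraph.edgeSet_deleteEdges]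
      exact ⟨f.2, hf⟩
    have := congrFun hres ⟨f.1, hf'⟩
    exact this
  funext e
  by_cases he : (e : Sym2 (Fin n)) = s(v, u)
  · by_contra hne12
    -- every color appears exactly t-1 times at v under c₁
    have hrpos : 0 < r := by
      rcases Nat.eq_zero_or_pos r with rfl | h
      · exact (c₁ e).elim0
      · exact h
    have hsum := sum_colNbhd hrpos G c₁ v
    have hall : ∀ i, (colNbhd G c₁ i v).ncard = t - 1 := by
      by_contra hcon
      push_neg at hcon
      obtain ⟨i₀, hi₀⟩ := hcon
      have hlt : (colNbhd G c₁ i₀ v).ncard < t - 1 :=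
        lt_of_le_of_ne (Nat.le_sub_one_of_lt (hc₁ i₀ v)) hi₀
      have : ∑ i : Fin r, (colNbhd G c₁ i v).ncard < ∑ _i : Fin r, (t - 1) :=
        Finset.sum_lt_sum (fun i _ => Nat.le_sub_one_of_lt (hc₁ i v))
          ⟨i₀, Finset.mem_univ _, hlt⟩
      rw [Finset.sum_const, Finset.card_univ, Fintype.card_fin, smul_eq_mul] at this
      omega
    set j := c₂ e with hj
    have hvu_mem : (⟨s(v, u), G.mem_edgeSet.mpr hadj⟩ : G.edgeSet) = e :=
      Subtype.ext he.symm
    have hu_in : u ∈ colNbhd G c₂ j v := ⟨hadj, by rw [hvu_mem]⟩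
    have hu_out : u ∉ colNbhd G c₁ j v := by
      rintro ⟨_, hcu⟩
      rw [hvu_mem] at hcu
      exact hne12 hcu
    have hsub : colNbhd G c₁ j v ⊆ colNbhd G c₂ j v := by
      rintro w ⟨hw, hcw⟩
      have hwu : w ≠ u := by
        rintro rfl
        exact hu_out ⟨hw, hcw⟩
      have hedge : s(v, w) ≠ s(v, u) := fun hh => hwu (Sym2.congr_right.mp hh)
      exact ⟨hw, by rw [← hagree ⟨s(v, w), G.mem_edgeSet.mpr hw⟩ hedge]; exact hcw⟩
    have hins : insert u (colNbhd G c₁ j v) ⊆ colNbhd G c₂ j v := by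
      rintro w hw
      rcases Set.mem_insert_iff.mp hw with rfl | hw
      · exact hu_in
      · exact hsub hw
    have : t ≤ (colNbhd G c₂ j v).ncard := by
      have h1 : (insert u (colNbhd G c₁ j v)).ncard = t - 1 + 1 := by
        rw [Set.ncard_insert_of_notMem hu_out (Set.toFinite _), hall j]
      have h2 := Set.ncard_le_ncard hins (Set.toFinite _)
      omega
    exact absurd this (not_le.mpr (hc₂ j v))
  · exact hagree e he

end Delete

section Add
variable {n r t : ℕ}

lemma goodCount_le_add (ht : 2 ≤ t) (hr : 2 ≤ r) {G : SimpleGraph (Fin n)} {u v : Fin n}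
    (hne : u ≠ v) (hnadj : ¬ G.Adj u v)
    (hu : (G.neighborSet u).ncard < (r + 1) / 2 * (t - 1))
    (hv : (G.neighborSet v).ncard < (r + 1) / 2 * (t - 1)) :
    goodCount r (_root_.starGraph t) G ≤
      goodCount r (_root_.starGraph t) (G ⊔ SimpleGraph.fromEdgeSet {s(u, v)}) := by
  classical
  have ht1 : 1 ≤ t := le_trans (by norm_num) ht
  set G'' := G ⊔ SimpleGraph.fromEdgeSet {s(u, v)} with hG''
  have hle : G ≤ G'' := le_sup_left
  have hE : G''.edgeSet = G.edgeSet ∪ {s(u, v)} := by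
    rw [hG'', SimpleGraph.edgeSet_sup, SimpleGraph.edgeSet_fromEdgeSet]
    congr 1
    ext e
    simp only [Set.mem_diff, Set.mem_singleton_iff, Set.mem_setOf_eq]
    constructor
    · rintro ⟨h, _⟩; exact h
    · rintro rfl; exact ⟨rfl, by simp [Sym2.isDiag_iff_proj_eq, hne]⟩
  -- extension of a coloring
  have extGood : ∀ cc : {c : G.edgeSet → Fin r // GoodCol t G c},
      ∃ i : Fin r, GoodCol t G''
        (fun e => if h : (e : Sym2 (Fin n)) ∈ G.edgeSet then cc.1 ⟨e, h⟩ else i) := by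
    rintro ⟨c, hc⟩
    -- blocked colors at u and v
    set Bu : Finset (Fin r) := univ.filter (fun i => t - 1 ≤ (colNbhd G c i u).ncard) with hBu
    set Bv : Finset (Fin r) := univ.filter (fun i => t - 1 ≤ (colNbhd G c i v).ncard) with hBv
    have hrpos : 0 < r := by omega
    have hblock : ∀ (w : Fin n) (B : Finset (Fin r)),
        B = univ.filter (fun i => t - 1 ≤ (colNbhd G c i w).ncard) →
        (G.neighborSet w).ncard < (r + 1) / 2 * (t - 1) → B.card < (r + 1) / 2 := by
      intro w B hB hw
      have h1 : B.card * (t - 1) ≤ ∑ i ∈ B, (colNbhd G c i w).ncard := by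
        calc B.card * (t - 1) = ∑ _i ∈ B, (t - 1) := by rw [Finset.sum_const, smul_eq_mul]
          _ ≤ ∑ i ∈ B, (colNbhd G c i w).ncard := by
            refine Finset.sum_le_sum fun i hi => ?_
            rw [hB] at hi
            exact (Finset.mem_filter.mp hi).2
      have h2 : ∑ i ∈ B, (colNbhd G c i w).ncard ≤ ∑ i : Fin r, (colNbhd G c i w).ncard :=
        Finset.sum_le_sum_of_subset (by rw [hB]; exact Finset.filter_subset _ _)
      have h3 := sum_colNbhd hrpos G c w
      have h4 : B.card * (t - 1) < (r + 1) / 2 * (t - 1) := by omega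
      exact Nat.lt_of_mul_lt_mul_right h4
    have hcu := hblock u Bu hBu hu
    have hcv := hblock v Bv hBv hv
    have hex : ∃ i : Fin r, i ∉ Bu ∪ Bv := by
      by_contra hcon
      push_neg at hcon
      have : (univ : Finset (Fin r)) ⊆ Bu ∪ Bv := fun i _ => hcon i
      have hcard := Finset.card_le_card this
      rw [Finset.card_univ, Fintype.card_fin] at hcard
      have := Finset.card_union_le Bu Bv
      omega
    obtain ⟨i, hi⟩ := hex
    rw [Finset.mem_union, not_or, hBu, hBv, Finset.mem_filter, Finset.mem_filter] at hi
    push_neg at hi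
    have hiu : (colNbhd G c i u).ncard < t - 1 := hi.1 (Finset.mem_univ _)
    have hiv : (colNbhd G c i v).ncard < t - 1 := hi.2 (Finset.mem_univ _)
    refine ⟨i, ?_⟩
    intro j w
    -- membership decomposition
    have hmem : ∀ x, x ∈ colNbhd G''
        (fun e => if h : (e : Sym2 (Fin n)) ∈ G.edgeSet then c ⟨e, h⟩ else i) j w →
        x ∈ colNbhd G c j w ∨ (j = i ∧ ((w = u ∧ x = v) ∨ (w = v ∧ x = u))) := by
      rintro x ⟨hadj, hcx⟩
      by_cases hGx : G.Adj w x
      · left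
        refine ⟨hGx, ?_⟩
        simp only [dif_pos (G.mem_edgeSet.mpr hGx)] at hcx
        exact hcx
      · right
        have hadj' : s(w, x) = s(u, v) := by
          rcases (SimpleGraph.sup_adj _ _ _ _).mp hadj with h | h
          · exact absurd h hGx
          · exact ((SimpleGraph.fromEdgeSet_adj _).mp h).1
        have hnm : s(w, x) ∉ G.edgeSet := fun hm => hGx (G.mem_edgeSet.mp hm)
        simp only [dif_neg hnm] at hcx
        refine ⟨hcx.symm, ?_⟩
        rcases Sym2.eq_iff.mp hadj' with ⟨h1, h2⟩ | ⟨h1, h2⟩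
        · exact Or.inl ⟨h1, h2⟩
        · exact Or.inr ⟨h1, h2⟩
    by_cases hji : j = i
    · subst hji
      by_cases hwu : w = u
      · subst hwu
        have hsub : colNbhd G''
            (fun e => if h : (e : Sym2 (Fin n)) ∈ G.edgeSet then c ⟨e, h⟩ else j) j w ⊆
            colNbhd G c j w ∪ {v} := by
          intro x hx
          rcases hmem x hx with h | ⟨_, ⟨_, rfl⟩ | ⟨hwv, _⟩⟩
          · exact Or.inl h
          · exact Or.inr rfl
          · exact absurd hwv hne
        calc (colNbhd G'' _ j w).ncard ≤ (colNbhd G c j w ∪ {v}).ncard :=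
              Set.ncard_le_ncard hsub (Set.toFinite _)
          _ ≤ (colNbhd G c j w).ncard + 1 :=
              le_trans (Set.ncard_union_le _ _) (by simp)
          _ < t := by omega
      · by_cases hwv : w = v
        · subst hwv
          have hsub : colNbhd G''
              (fun e => if h : (e : Sym2 (Fin n)) ∈ G.edgeSet then c ⟨e, h⟩ else j) j w ⊆
              colNbhd G c j w ∪ {u} := by
            intro x hx
            rcases hmem x hx with h | ⟨_, ⟨hwu', _⟩ | ⟨_, rfl⟩⟩
            · exact Or.inl h
            · exact absurd hwu'.symm hne
            · exact Or.inr rfl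
          calc (colNbhd G'' _ j w).ncard ≤ (colNbhd G c j w ∪ {u}).ncard :=
                Set.ncard_le_ncard hsub (Set.toFinite _)
            _ ≤ (colNbhd G c j w).ncard + 1 :=
                le_trans (Set.ncard_union_le _ _) (by simp)
            _ < t := by omega
        · have hsub : colNbhd G''
              (fun e => if h : (e : Sym2 (Fin n)) ∈ G.edgeSet then c ⟨e, h⟩ else j) j w ⊆
              colNbhd G c j w := by
            intro x hx
            rcases hmem x hx with h | ⟨_, ⟨h1, _⟩ | ⟨h1, _⟩⟩
            · exact h
            · exact absurd h1 hwu
            · exact absurd h1 hwv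
          exact lt_of_le_of_lt (Set.ncard_le_ncard hsub (Set.toFinite _)) (hc j w)
    · have hsub : colNbhd G''
          (fun e => if h : (e : Sym2 (Fin n)) ∈ G.edgeSet then c ⟨e, h⟩ else i) j w ⊆
          colNbhd G c j w := by
        intro x hx
        rcases hmem x hx with h | ⟨h1, _⟩
        · exact h
        · exact absurd h1 hji
      exact lt_of_le_of_lt (Set.ncard_le_ncard hsub (Set.toFinite _)) (hc j w)
  choose F hF using extGood
  rw [goodCount_eq_card ht1, goodCount_eq_card ht1]
  refine Nat.card_le_card_of_injective
    (fun cc => ⟨fun e => if h : (e : Sym2 (Fin n)) ∈ G.edgeSet then cc.1 ⟨e, h⟩ else F cc,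
      hF cc⟩) ?_
  rintro ⟨c₁, hc₁⟩ ⟨c₂, hc₂⟩ hres
  simp only [Subtype.mk.injEq] at hres ⊢
  funext e
  have he'' : (e : Sym2 (Fin n)) ∈ G''.edgeSet := SimpleGraph.edgeSet_mono hle e.2
  have := congrFun hres ⟨e.1, he''⟩
  simpa only [dif_pos e.2] using this

end Add

section Helpers
variable {n r t : ℕ}

lemma goodCount_eq_zero (ht1 : 1 ≤ t) (hr : 0 < r) {G : SimpleGraph (Fin n)} {v : Fin n}
    (hdeg : r * (t - 1) + 1 ≤ (G.neighborSet v).ncard) :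
    goodCount r (_root_.starGraph t) G = 0 := by
  rw [goodCount_eq_card ht1, Nat.card_eq_zero]
  left
  constructor
  rintro ⟨c, hc⟩
  have hsum := sum_colNbhd hr G c v
  have hle : ∑ i : Fin r, (colNbhd G c i v).ncard ≤ ∑ _i : Fin r, (t - 1) :=
    Finset.sum_le_sum fun i _ => Nat.le_sub_one_of_lt (hc i v)
  rw [Finset.sum_const, Finset.card_univ, Fintype.card_fin, smul_eq_mul] at hle
  omega

lemma nbhd_delete (G : SimpleGraph (Fin n)) {v u : Fin n} :
    (G.deleteEdges {s(v, u)}).neighborSet v = G.neighborSet v \ {u} := by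
  ext w
  simp only [SimpleGraph.mem_neighborSet, SimpleGraph.deleteEdges_adj, Set.mem_diff,
    Set.mem_singleton_iff]
  constructor
  · rintro ⟨ha, hs⟩
    exact ⟨ha, fun hw => hs (by rw [hw])⟩
  · rintro ⟨ha, hw⟩
    exact ⟨ha, fun hs => hw (Sym2.congr_right.mp hs)⟩

lemma nbhd_le_subset {G₁ G₂ : SimpleGraph (Fin n)} (h : G₁ ≤ G₂) (w : Fin n) :
    G₁.neighborSet w ⊆ G₂.neighborSet w := fun _ hx => h hx

lemma nbhd_add_other {u v : Fin n} (G : SimpleGraph (Fin n)) {w : Fin n}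
    (hwu : w ≠ u) (hwv : w ≠ v) :
    (G ⊔ SimpleGraph.fromEdgeSet {s(u, v)}).neighborSet w = G.neighborSet w := by
  ext x
  simp only [SimpleGraph.mem_neighborSet, SimpleGraph.sup_adj, SimpleGraph.fromEdgeSet_adj,
    Set.mem_singleton_iff]
  constructor
  · rintro (h | ⟨hs, _⟩)
    · exact h
    · rcases Sym2.eq_iff.mp hs with ⟨h1, _⟩ | ⟨h1, _⟩
      · exact absurd h1 hwu
      · exact absurd h1 hwv
  · exact Or.inl

lemma nbhd_add_left (G : SimpleGraph (Fin n)) {u v : Fin n} :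
    (G ⊔ SimpleGraph.fromEdgeSet {s(u, v)}).neighborSet u ⊆ G.neighborSet u ∪ {v} := by
  intro x hx
  rcases (SimpleGraph.sup_adj _ _ _ _).mp hx with h | h
  · exact Or.inl h
  · obtain ⟨hs, hne'⟩ := (SimpleGraph.fromEdgeSet_adj _).mp h
    rcases Sym2.eq_iff.mp hs with ⟨_, h2⟩ | ⟨_, h2⟩
    · exact Or.inr h2
    · exact absurd h2.symm hne'

lemma nbhd_add_right (G : SimpleGraph (Fin n)) {u v : Fin n} (hne : u ≠ v) :
    (G ⊔ SimpleGraph.fromEdgeSet {s(u, v)}).neighborSet v ⊆ G.neighborSet v ∪ {u} := by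
  intro x hx
  rcases (SimpleGraph.sup_adj _ _ _ _).mp hx with h | h
  · exact Or.inl h
  · obtain ⟨hs, hne'⟩ := (SimpleGraph.fromEdgeSet_adj _).mp h
    rcases Sym2.eq_iff.mp hs with ⟨h1, _⟩ | ⟨_, h2⟩
    · exact absurd h1.symm hne
    · exact Or.inr h2

end Helpers

theorem stmt7 (r t n : ℕ) (hr : 2 ≤ r) (ht : 3 ≤ t) :
    ∃ G : SimpleGraph (Fin n),
      goodCount r (_root_.starGraph t) G = cMax r (_root_.starGraph t) n ∧
      (∀ v : Fin n, (G.neighborSet v).ncard ≤ r * (t - 1) - 1) ∧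
      {v : Fin n | (G.neighborSet v).ncard < ((r + 1) / 2) * (t - 1)}.ncard ≤
        ((r + 1) / 2) * (t - 1) + 1 := by
  classical
  have ht1 : 1 ≤ t := by omega
  have ht2 : 2 ≤ t := by omega
  have hrpos : 0 < r := by omega
  have hRbig : 4 ≤ r * (t - 1) := by
    calc 4 = 2 * 2 := rfl
    _ ≤ r * (t - 1) := Nat.mul_le_mul hr (by omega)
  have hqr : ((r + 1) / 2 + 1) * (t - 1) ≤ r * (t - 1) :=
    Nat.mul_le_mul_right _ (by omega)
  have hq_lt_R : (r + 1) / 2 * (t - 1) + 1 ≤ r * (t - 1) := by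
    have : (r + 1) / 2 * (t - 1) + (t - 1) = ((r + 1) / 2 + 1) * (t - 1) := by ring
    omega
  set M := Nat.card (Sym2 (Fin n)) with hMdef
  have hM : ∀ G : SimpleGraph (Fin n), G.edgeSet.ncard ≤ M := fun G => by
    calc G.edgeSet.ncard ≤ (Set.univ : Set (Sym2 (Fin n))).ncard :=
          Set.ncard_le_ncard (Set.subset_univ _) (Set.toFinite _)
      _ = M := Set.ncard_univ _
  set big : SimpleGraph (Fin n) → Set (Fin n) :=
    fun G => {w | r * (t - 1) ≤ (G.neighborSet w).ncard} with hbigdef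
  set m : SimpleGraph (Fin n) → ℕ :=
    fun G => (big G).ncard * (M + 1) + (M - G.edgeSet.ncard) with hmdef
  set P : SimpleGraph (Fin n) → Prop :=
    fun G => goodCount r (_root_.starGraph t) G = cMax r (_root_.starGraph t) n with hPdef
  obtain ⟨G₀, hG₀⟩ := cMax_attained (_root_.starGraph t) (n := n) (r := r)
  have hSne : {k | ∃ G, P G ∧ m G = k}.Nonempty := ⟨m G₀, G₀, hG₀, rfl⟩
  obtain ⟨G, hPG, hmG⟩ := Nat.sInf_mem hSne
  have hminG : ∀ G', P G' → m G ≤ m G' := fun G' h => by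
    rw [hmG]; exact Nat.sInf_le ⟨G', h, rfl⟩
  have hPle : ∀ G' : SimpleGraph (Fin n),
      goodCount r (_root_.starGraph t) G ≤ goodCount r (_root_.starGraph t) G' → P G' := fun G' h =>
    le_antisymm (goodCount_le_cMax _ _) (hPG ▸ h)
  refine ⟨G, hPG, ?_, ?_⟩
  · -- max degree bound
    intro v
    by_contra hbig2
    have hdeg : r * (t - 1) ≤ (G.neighborSet v).ncard := by omega
    rcases eq_or_lt_of_le hdeg with hdeq | hdlt
    · -- degree exactly r(t-1): delete an edge
      have hpos : 0 < (G.neighborSet v).ncard := by omega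
      obtain ⟨u, hu⟩ : (G.neighborSet v).Nonempty := by
        rcases Set.eq_empty_or_nonempty (G.neighborSet v) with hem | hno
        · rw [hem, Set.ncard_empty] at hpos
          omega
        · exact hno
      have hadj : G.Adj v u := hu
      set G' := G.deleteEdges {s(v, u)} with hG'
      have hle : G' ≤ G := SimpleGraph.deleteEdges_le _
      have hPG' : P G' := hPle G' (goodCount_le_delete ht2 hadj hdeg)
      have hbigsub : big G' ⊂ big G := by
        constructor
        · intro w hw
          exact le_trans hw (Set.ncard_le_ncard (nbhd_le_subset hle w) (Set.toFinite _))
        · intro hsup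
          have hvmem : v ∈ big G := hdeg
          have hv' : v ∈ big G' := hsup hvmem
          have hnb : (G'.neighborSet v).ncard = (G.neighborSet v).ncard - 1 := by
            rw [hG', nbhd_delete]
            have := Set.ncard_diff_singleton_add_one hu (Set.toFinite _)
            omega
          have : r * (t - 1) ≤ (G.neighborSet v).ncard - 1 := le_trans hv' (le_of_eq hnb)
          omega
      have hlt : (big G').ncard < (big G).ncard :=
        Set.ncard_lt_ncard hbigsub (Set.toFinite _)
      set b := (big G).ncard with hb
      have hb1 : 1 ≤ b := by omega
      have hmG' : m G' < m G := by
        have e1 : m G' ≤ (b - 1) * (M + 1) + M :=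
          add_le_add (Nat.mul_le_mul_right _ (by omega)) (Nat.sub_le _ _)
        have e2 : (b - 1) * (M + 1) + M < b * (M + 1) := by
          have hbeq : b = (b - 1) + 1 := by omega
          calc (b - 1) * (M + 1) + M < (b - 1) * (M + 1) + (M + 1) := by omega
            _ = ((b - 1) + 1) * (M + 1) := by ring
            _ = b * (M + 1) := by rw [← hbeq]
        have e3 : b * (M + 1) ≤ m G := Nat.le_add_right _ _
        omega
      exact absurd (hminG G' hPG') (not_le.mpr hmG')
    · -- degree > r(t-1): no good colorings at all
      have h0 : goodCount r (_root_.starGraph t) G = 0 := goodCount_eq_zero ht1 hrpos hdlt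
      have h1 : 1 ≤ cMax r (_root_.starGraph t) (n := n) := one_le_cMax ht1 hrpos
      rw [hPdef] at hPG
      omega
  · -- low-degree vertices
    by_contra hL
    push_neg at hL
    set L := {w : Fin n | (G.neighborSet w).ncard < (r + 1) / 2 * (t - 1)} with hLdef
    have hLcard : (r + 1) / 2 * (t - 1) + 2 ≤ L.ncard := hL
    have hpair : ∃ u ∈ L, ∃ v ∈ L, u ≠ v ∧ ¬ G.Adj u v := by
      by_contra hall
      push_neg at hall
      obtain ⟨u, hu⟩ : L.Nonempty := by
        rw [← Set.ncard_pos (Set.toFinite _)]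
        omega
      have hsub : L \ {u} ⊆ G.neighborSet u := by
        rintro w ⟨hw, hwu⟩
        exact hall u hu w hw (fun h => hwu (by rw [h]; rfl))
      have h1 := Set.ncard_diff_singleton_add_one hu (Set.toFinite _)
      have h2 := Set.ncard_le_ncard hsub (Set.toFinite _)
      have h3 : (G.neighborSet u).ncard < (r + 1) / 2 * (t - 1) := hu
      omega
    obtain ⟨u, hu, v, hv, huv, hnadj⟩ := hpair
    set G'' := G ⊔ SimpleGraph.fromEdgeSet {s(u, v)} with hG''
    have hPG'' : P G'' := hPle G'' (goodCount_le_add ht2 hr huv hnadj hu hv)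
    have hEeq : G''.edgeSet = insert s(u, v) G.edgeSet := by
      rw [hG'', SimpleGraph.edgeSet_sup, SimpleGraph.edgeSet_fromEdgeSet]
      have : ({s(u, v)} : Set (Sym2 (Fin n))) \ {e | e.IsDiag} = {s(u, v)} := by
        ext e
        simp only [Set.mem_diff, Set.mem_singleton_iff, Set.mem_setOf_eq]
        constructor
        · rintro ⟨h, _⟩; exact h
        · rintro rfl; exact ⟨rfl, by simp [Sym2.isDiag_iff_proj_eq, huv]⟩
      rw [show (Sym2.diagSet : Set (Sym2 (Fin n))) = {e | e.IsDiag} from rfl, this,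
        Set.union_singleton]
    have hnm : s(u, v) ∉ G.edgeSet := fun h => hnadj (G.mem_edgeSet.mp h)
    have hEcard : G''.edgeSet.ncard = G.edgeSet.ncard + 1 := by
      rw [hEeq, Set.ncard_insert_of_notMem hnm (Set.toFinite _)]
    have hbigeq : big G'' = big G := by
      ext w
      by_cases hwu : w = u
      · subst hwu
        simp only [hbigdef, Set.mem_setOf_eq]
        constructor
        · intro hcon
          have hc1 : (G''.neighborSet w).ncard ≤ (G.neighborSet w).ncard + 1 := by
            calc (G''.neighborSet w).ncard ≤ (G.neighborSet w ∪ {v}).ncard :=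
                  Set.ncard_le_ncard (nbhd_add_left G) (Set.toFinite _)
              _ ≤ (G.neighborSet w).ncard + 1 :=
                  le_trans (Set.ncard_union_le _ _) (by simp)
          have hc2 : (G.neighborSet w).ncard < (r + 1) / 2 * (t - 1) := hu
          omega
        · intro hcon
          have hc2 : (G.neighborSet w).ncard < (r + 1) / 2 * (t - 1) := hu
          omega
      · by_cases hwv : w = v
        · subst hwv
          simp only [hbigdef, Set.mem_setOf_eq]
          constructor
          · intro hcon
            have hc1 : (G''.neighborSet w).ncard ≤ (G.neighborSet w).ncard + 1 := by
              calc (G''.neighborSet w).ncard ≤ (G.neighborSet w ∪ {u}).ncard :=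
                    Set.ncard_le_ncard (nbhd_add_right G huv) (Set.toFinite _)
                _ ≤ (G.neighborSet w).ncard + 1 :=
                    le_trans (Set.ncard_union_le _ _) (by simp)
            have hc2 : (G.neighborSet w).ncard < (r + 1) / 2 * (t - 1) := hv
            omega
          · intro hcon
            have hc2 : (G.neighborSet w).ncard < (r + 1) / 2 * (t - 1) := hv
            omega
        · simp only [hbigdef, Set.mem_setOf_eq]
          rw [hG'', nbhd_add_other G hwu hwv]
    have hmlt : m G'' < m G := by
      rw [hmdef]
      simp only [hbigeq, hEcard]
      have hEM := hM G''
      rw [hEcard] at hEM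
      omega
    exact absurd (hminG G'' hPG'') (not_le.mpr hmlt)
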